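/- arXiv:math/0502519 — 2 statements merged into one kernel-verified Lean document; each statement's English description precedes it below -/
import Mathlib

section
/- In the model space (H, d), for every t ∈ (0,∞) and all θ₁, θ₂ ∈ ℝ, the distance satisfies d((t,θ₁),(t,θ₂)) ≥ min( t , t³·|θ₁ − θ₂|/8 ). -/
open Set

/-- The speed at time `s` of a path `γ(s) = (r(s), θ(s))` in the model space
`(H; ds² = dr² + r⁶ dθ²)`, namely `√(r′(s)² + r(s)⁶ θ′(s)²)`. -/
noncomputable def speedWP (γ : ℝ → ℝ × ℝ) (s : ℝ) : ℝ :=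
  Real.sqrt ((deriv γ s).1 ^ 2 + (γ s).1 ^ 6 * (deriv γ s).2 ^ 2)

/-- The length of a path `γ : [0,1] → H` for the metric `ds² = dr² + r⁶ dθ²`. -/
noncomputable def pathLengthWP (γ : ℝ → ℝ × ℝ) : ℝ :=
  ∫ s in (0 : ℝ)..1, speedWP γ s

/-- A path `γ : [0,1] → ℝ²` is piecewise `C¹` if it is continuous on `[0,1]` and there is a
partition `0 = t₀ < t₁ < ⋯ < tₙ = 1` such that `γ` is `C¹` on each subinterval `[tᵢ, tᵢ₊₁]`. -/
def PiecewiseC1 (γ : ℝ → ℝ × ℝ) : Prop :=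
  ContinuousOn γ (Icc 0 1) ∧
    ∃ (n : ℕ) (t : Fin (n + 1) → ℝ), StrictMono t ∧ t 0 = 0 ∧ t (Fin.last n) = 1 ∧
      ∀ i : Fin n, ContDiffOn ℝ 1 γ (Icc (t i.castSucc) (t i.succ))

/-- The distance in the model space `H = (0,∞) × ℝ` with Riemannian metric
`ds² = dr² + r⁶ dθ²` (Yamada's model for the Weil–Petersson metric transverse to a boundary
stratum): the infimum of lengths of piecewise `C¹` paths in `H` joining the two points. -/
noncomputable def Hdist (p q : ℝ × ℝ) : ℝ :=
  sInf {L : ℝ | ∃ γ : ℝ → ℝ × ℝ, PiecewiseC1 γ ∧ γ 0 = p ∧ γ 1 = q ∧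
    (∀ s ∈ Icc (0 : ℝ) 1, 0 < (γ s).1) ∧ L = pathLengthWP γ}

open MeasureTheory intervalIntegral


lemma exists_piece {n : ℕ} {tt : Fin (n+1) → ℝ} (hmono : StrictMono tt)
    (h0 : tt 0 = 0) (h1 : tt (Fin.last n) = 1) {x : ℝ} (hx : x ∈ Ico (0:ℝ) 1) :
    ∃ i : Fin n, tt i.castSucc ≤ x ∧ x < tt i.succ := by
  classical
  set S : Finset (Fin (n+1)) := Finset.univ.filter (fun j => x < tt j) with hS
  have hlast : Fin.last n ∈ S := by simp [hS, h1, hx.2]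
  have hne : S.Nonempty := ⟨_, hlast⟩
  set j0 := S.min' hne with hj0
  have hj0S : j0 ∈ S := S.min'_mem hne
  have hj0x : x < tt j0 := by simpa [hS] using hj0S
  have hj0ne : j0 ≠ 0 := by
    intro h
    rw [h, h0] at hj0x
    exact absurd hx.1 (not_le.2 hj0x)
  refine ⟨j0.pred hj0ne, ?_, ?_⟩
  · by_contra hc
    push_neg at hc
    have hmem : (j0.pred hj0ne).castSucc ∈ S := by simp [hS, hc]
    have := S.min'_le _ hmem
    have hlt : ((j0.pred hj0ne).castSucc : Fin (n+1)) < j0 :=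
      Fin.castSucc_pred_lt hj0ne
    exact absurd this (not_le.2 hlt)
  · rw [Fin.succ_pred]
    exact hj0x

lemma hasDerivWithinAt_fst' {γ : ℝ → ℝ × ℝ} {D : ℝ × ℝ} {s : Set ℝ} {x : ℝ}
    (h : HasDerivWithinAt γ D s x) : HasDerivWithinAt (fun u => (γ u).1) D.1 s x := by
  have := h.hasFDerivWithinAt.fst
  simpa using this.hasDerivWithinAt

lemma hasDerivWithinAt_snd' {γ : ℝ → ℝ × ℝ} {D : ℝ × ℝ} {s : Set ℝ} {x : ℝ}
    (h : HasDerivWithinAt γ D s x) : HasDerivWithinAt (fun u => (γ u).2) D.2 s x := by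
  have := h.hasFDerivWithinAt.snd
  simpa using this.hasDerivWithinAt

lemma hasDerivAt_fst' {γ : ℝ → ℝ × ℝ} {D : ℝ × ℝ} {x : ℝ}
    (h : HasDerivAt γ D x) : HasDerivAt (fun u => (γ u).1) D.1 x := by
  have := h.hasFDerivAt.fst
  simpa using this.hasDerivAt

lemma hasDerivAt_snd' {γ : ℝ → ℝ × ℝ} {D : ℝ × ℝ} {x : ℝ}
    (h : HasDerivAt γ D x) : HasDerivAt (fun u => (γ u).2) D.2 x := by
  have := h.hasFDerivAt.snd
  simpa using this.hasDerivAt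

lemma abs_le_sqrt_add {u v : ℝ} (hv : 0 ≤ v) : |u| ≤ Real.sqrt (u^2 + v) := by
  rw [← Real.sqrt_sq_eq_abs]
  exact Real.sqrt_le_sqrt (by linarith)

lemma abs_le_sqrt_add' {u v : ℝ} (hv : 0 ≤ v) : |u| ≤ Real.sqrt (v + u^2) := by
  rw [← Real.sqrt_sq_eq_abs]
  exact Real.sqrt_le_sqrt (by linarith)

lemma right_deriv_piece {γ : ℝ → ℝ × ℝ} {a b x : ℝ} (hC1 : ContDiffOn ℝ 1 γ (Icc a b))
    (hax : a ≤ x) (hxb : x < b) :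
    HasDerivWithinAt γ (derivWithin γ (Icc a b) x) (Ioi x) x := by
  have hx : x ∈ Icc a b := ⟨hax, hxb.le⟩
  have h1 : HasDerivWithinAt γ (derivWithin γ (Icc a b) x) (Icc a b) x :=
    ((hC1.differentiableOn one_ne_zero) x hx).hasDerivWithinAt
  apply h1.mono_of_mem_nhdsWithin
  rw [mem_nhdsWithin]
  exact ⟨Iio b, isOpen_Iio, hxb, fun y hy => ⟨hax.trans hy.2.le, hy.1.le⟩⟩

lemma diffAt_piece_interior {γ : ℝ → ℝ × ℝ} {a b x : ℝ} (hC1 : ContDiffOn ℝ 1 γ (Icc a b))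
    (hax : a < x) (hxb : x < b) :
    DifferentiableAt ℝ γ x ∧ derivWithin γ (Icc a b) x = deriv γ x := by
  have hmem : Icc a b ∈ nhds x := Icc_mem_nhds hax hxb
  have hd : DifferentiableAt ℝ γ x :=
    ((hC1.differentiableOn one_ne_zero) x ⟨hax.le, hxb.le⟩).differentiableAt hmem
  exact ⟨hd, derivWithin_of_mem_nhds hmem⟩

lemma piece_subset {n : ℕ} {tt : Fin (n+1) → ℝ} (hmono : StrictMono tt)
    (h0 : tt 0 = 0) (h1 : tt (Fin.last n) = 1) (i : Fin n) :
    Icc (tt i.castSucc) (tt i.succ) ⊆ Icc (0:ℝ) 1 := by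
  apply Icc_subset_Icc
  · rw [← h0]; exact hmono.monotone (Fin.zero_le _)
  · rw [← h1]; exact hmono.monotone (Fin.le_last _)

lemma speed_intervalIntegrable_piece {γ : ℝ → ℝ × ℝ} (hcont : ContinuousOn γ (Icc 0 1))
    {n : ℕ} {tt : Fin (n+1) → ℝ} (hmono : StrictMono tt) (h0 : tt 0 = 0)
    (h1 : tt (Fin.last n) = 1)
    (hp : ∀ i : Fin n, ContDiffOn ℝ 1 γ (Icc (tt i.castSucc) (tt i.succ))) (i : Fin n) :
    IntervalIntegrable (speedWP γ) volume (tt i.castSucc) (tt i.succ) := by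
  set a := tt i.castSucc with ha
  set b := tt i.succ with hb
  have hab : a < b := hmono (Fin.castSucc_lt_succ : i.castSucc < i.succ)
  have hγc : ContinuousOn γ (Icc a b) := hcont.mono (piece_subset hmono h0 h1 i)
  have hgc : ContinuousOn (derivWithin γ (Icc a b)) (Icc a b) :=
    (hp i).continuousOn_derivWithin (uniqueDiffOn_Icc hab) le_rfl
  set h : ℝ → ℝ := fun s => Real.sqrt ((derivWithin γ (Icc a b) s).1 ^ 2
    + (γ s).1 ^ 6 * (derivWithin γ (Icc a b) s).2 ^ 2) with hh
  have hhc : ContinuousOn h (Icc a b) := by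
    apply ContinuousOn.sqrt
    apply ContinuousOn.add
    · exact ((continuous_fst.comp_continuousOn hgc).pow 2)
    · exact ((continuous_fst.comp_continuousOn hγc).pow 6).mul
        ((continuous_snd.comp_continuousOn hgc).pow 2)
  have hInt : IntervalIntegrable h volume a b := hhc.intervalIntegrable_of_Icc hab.le
  have heq : EqOn h (speedWP γ) (Ioo a b) := by
    intro s hs
    have : derivWithin γ (Icc a b) s = deriv γ s := (diffAt_piece_interior (hp i) hs.1 hs.2).2
    simp only [hh, speedWP, this]
  have h2 : IntegrableOn (speedWP γ) (Ioo a b) volume :=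
    (hInt.1.mono_set Ioo_subset_Ioc_self).congr_fun heq measurableSet_Ioo
  rw [intervalIntegrable_iff_integrableOn_Ioc_of_le hab.le,
    integrableOn_Ioc_iff_integrableOn_Ioo]
  exact h2

lemma speed_intervalIntegrable {γ : ℝ → ℝ × ℝ} (hcont : ContinuousOn γ (Icc 0 1))
    {n : ℕ} {tt : Fin (n+1) → ℝ} (hmono : StrictMono tt) (h0 : tt 0 = 0)
    (h1 : tt (Fin.last n) = 1)
    (hp : ∀ i : Fin n, ContDiffOn ℝ 1 γ (Icc (tt i.castSucc) (tt i.succ))) :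
    IntervalIntegrable (speedWP γ) volume 0 1 := by
  have key := IntervalIntegrable.trans_iterate
    (a := fun k => tt ⟨min k n, by omega⟩) (μ := volume) (f := speedWP γ) (n := n) ?_
  · have e0 : (⟨min 0 n, by omega⟩ : Fin (n+1)) = 0 := by ext; simp
    have e1 : (⟨min n n, by omega⟩ : Fin (n+1)) = Fin.last n := by ext; simp [Fin.last]
    rw [e0, e1, h0, h1] at key
    exact key
  · intro k hk
    have e0 : (⟨min k n, by omega⟩ : Fin (n+1)) = (⟨k, hk⟩ : Fin n).castSucc := by
      ext; simp; omega
    have e1 : (⟨min (k+1) n, by omega⟩ : Fin (n+1)) = (⟨k, hk⟩ : Fin n).succ := by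
      ext; simp; omega
    rw [show (⟨min k n, by omega⟩ : Fin (n+1)) = (⟨k, hk⟩ : Fin n).castSucc from e0,
      show (⟨min (k+1) n, by omega⟩ : Fin (n+1)) = (⟨k, hk⟩ : Fin n).succ from e1]
    exact speed_intervalIntegrable_piece hcont hmono h0 h1 hp ⟨k, hk⟩

lemma speedWP_nonneg (γ : ℝ → ℝ × ℝ) (s : ℝ) : 0 ≤ speedWP γ s := Real.sqrt_nonneg _

section
variable {γ : ℝ → ℝ × ℝ} {n : ℕ} {tt : Fin (n+1) → ℝ}

/-- For a.e. point (off the partition points), the one-sided `derivWithin` over `Ioi x`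
of the first coordinate equals the first coordinate of `deriv γ`.  -/
lemma rightDeriv_eq_deriv (hmono : StrictMono tt) (h0 : tt 0 = 0)
    (h1 : tt (Fin.last n) = 1)
    (hp : ∀ i : Fin n, ContDiffOn ℝ 1 γ (Icc (tt i.castSucc) (tt i.succ)))
    {x : ℝ} (hx : x ∈ Ioo (0:ℝ) 1) (hxB : x ∉ range tt) :
    DifferentiableAt ℝ γ x ∧
      derivWithin (fun u => (γ u).1) (Ioi x) x = (deriv γ x).1 ∧
      derivWithin (fun u => (γ u).2) (Ioi x) x = (deriv γ x).2 := by
  obtain ⟨i, hi1, hi2⟩ := exists_piece hmono h0 h1 ⟨hx.1.le, hx.2⟩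
  have hax : tt i.castSucc < x := lt_of_le_of_ne hi1 (by
    intro h; exact hxB ⟨i.castSucc, h⟩)
  obtain ⟨hdiff, -⟩ := diffAt_piece_interior (hp i) hax hi2
  have hD := hdiff.hasDerivAt
  refine ⟨hdiff, ?_, ?_⟩
  · exact ((hasDerivAt_fst' hD).hasDerivWithinAt).derivWithin (uniqueDiffWithinAt_Ioi x)
  · exact ((hasDerivAt_snd' hD).hasDerivWithinAt).derivWithin (uniqueDiffWithinAt_Ioi x)

/-- The right derivative of the first coordinate exists at every `x ∈ Ioo 0 1`. -/
lemma rightDeriv_exists (hmono : StrictMono tt) (h0 : tt 0 = 0)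
    (h1 : tt (Fin.last n) = 1)
    (hp : ∀ i : Fin n, ContDiffOn ℝ 1 γ (Icc (tt i.castSucc) (tt i.succ)))
    {x : ℝ} (hx : x ∈ Ioo (0:ℝ) 1) :
    HasDerivWithinAt (fun u => (γ u).1)
        (derivWithin (fun u => (γ u).1) (Ioi x) x) (Ioi x) x ∧
      HasDerivWithinAt (fun u => (γ u).2)
        (derivWithin (fun u => (γ u).2) (Ioi x) x) (Ioi x) x := by
  obtain ⟨i, hi1, hi2⟩ := exists_piece hmono h0 h1 ⟨hx.1.le, hx.2⟩
  have hD := right_deriv_piece (hp i) hi1 hi2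
  exact ⟨(hasDerivWithinAt_fst' hD).differentiableWithinAt.hasDerivWithinAt,
    (hasDerivWithinAt_snd' hD).differentiableWithinAt.hasDerivWithinAt⟩

/-- The set of partition points together with `0` and `1` is Lebesgue-null. -/
lemma bad_ae : ∀ᵐ s : ℝ, s ∉ (range tt ∪ {0, 1} : Set ℝ) := by
  have hfin : (range tt ∪ {0, 1} : Set ℝ).Finite :=
    (finite_range tt).union (by simp)
  have h0 : volume (range tt ∪ {0, 1} : Set ℝ) = 0 := hfin.measure_zero _
  rw [ae_iff]
  exact measure_mono_null (fun s hs => not_not.mp hs) h0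

lemma ftc_bound_fst (hcont : ContinuousOn γ (Icc 0 1)) (hmono : StrictMono tt)
    (h0 : tt 0 = 0) (h1 : tt (Fin.last n) = 1)
    (hp : ∀ i : Fin n, ContDiffOn ℝ 1 γ (Icc (tt i.castSucc) (tt i.succ)))
    {c d : ℝ} (hc : 0 ≤ c) (hcd : c ≤ d) (hd : d ≤ 1) :
    |(γ d).1 - (γ c).1| ≤ ∫ s in c..d, speedWP γ s := by
  set f' : ℝ → ℝ := fun x => derivWithin (fun u => (γ u).1) (Ioi x) x with hf'
  set g : ℝ → ℝ := fun s => (deriv γ s).1 with hg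
  -- pointwise bound |g| ≤ speed
  have hbound : ∀ s, |g s| ≤ speedWP γ s := fun s =>
    abs_le_sqrt_add (by positivity)
  -- speed is integrable
  have hspeed01 : IntervalIntegrable (speedWP γ) volume 0 1 :=
    speed_intervalIntegrable hcont hmono h0 h1 hp
  have hsub : uIcc c d ⊆ uIcc (0:ℝ) 1 := by
    rw [uIcc_of_le hcd, uIcc_of_le zero_le_one]
    exact Icc_subset_Icc hc hd
  have hspeed : IntervalIntegrable (speedWP γ) volume c d := hspeed01.mono_set hsub
  -- g is integrable
  have hg_int : IntervalIntegrable g volume c d := by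
    apply hspeed.mono_fun
    · exact ((measurable_fst.comp (measurable_deriv γ)).aestronglyMeasurable)
    · refine Filter.Eventually.of_forall fun s => ?_
      simp only [Real.norm_eq_abs]
      rw [abs_of_nonneg (speedWP_nonneg γ s)]
      exact hbound s
  -- f' = g a.e. on the relevant sets
  have hae : ∀ᵐ s : ℝ, s ∉ (range tt ∪ {0, 1} : Set ℝ) := bad_ae
  have hf'g : ∀ s ∈ Icc c d, s ∉ (range tt ∪ {0, 1} : Set ℝ) → f' s = g s := by
    intro s hs hsB
    simp only [mem_union, mem_insert_iff, mem_singleton_iff, not_or] at hsB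
    have hs01 : s ∈ Ioo (0:ℝ) 1 := by
      constructor
      · exact lt_of_le_of_ne (hc.trans hs.1) (Ne.symm hsB.2.1)
      · exact lt_of_le_of_ne (hs.2.trans hd) hsB.2.2
    exact (rightDeriv_eq_deriv hmono h0 h1 hp hs01 hsB.1).2.1
  have hf'_ae : f' =ᵐ[volume.restrict (uIoc c d)] g := by
    filter_upwards [ae_restrict_of_ae hae, ae_restrict_mem measurableSet_uIoc] with s hs1 hs2
    rw [uIoc_of_le hcd] at hs2
    exact hf'g s ⟨hs2.1.le, hs2.2⟩ hs1
  have hf'_int : IntervalIntegrable f' volume c d := hg_int.congr_ae hf'_ae.symm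
  -- FTC
  have hcont1 : ContinuousOn (fun u => (γ u).1) (Icc c d) :=
    (continuous_fst.comp_continuousOn hcont).mono (Icc_subset_Icc hc hd)
  have hFTC : ∫ s in c..d, f' s = (γ d).1 - (γ c).1 := by
    apply integral_eq_sub_of_hasDeriv_right_of_le hcd hcont1 _ hf'_int
    intro x hx
    have hx01 : x ∈ Ioo (0:ℝ) 1 := ⟨lt_of_le_of_lt hc hx.1, lt_of_lt_of_le hx.2 hd⟩
    exact (rightDeriv_exists hmono h0 h1 hp hx01).1
  rw [← hFTC]
  calc |∫ s in c..d, f' s| ≤ ∫ s in c..d, |f' s| := abs_integral_le_integral_abs hcd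
    _ ≤ ∫ s in c..d, speedWP γ s := by
        apply integral_mono_ae_restrict hcd hf'_int.abs hspeed
        filter_upwards [ae_restrict_of_ae hae, ae_restrict_mem measurableSet_Icc] with s hs1 hs2
        rw [hf'g s hs2 hs1]
        exact hbound s

lemma ftc_bound_snd (hcont : ContinuousOn γ (Icc 0 1)) (hmono : StrictMono tt)
    (h0 : tt 0 = 0) (h1 : tt (Fin.last n) = 1)
    (hp : ∀ i : Fin n, ContDiffOn ℝ 1 γ (Icc (tt i.castSucc) (tt i.succ)))
    {m : ℝ} (hm : 0 < m) (hmle : ∀ s ∈ Icc (0:ℝ) 1, m ≤ (γ s).1) :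
    m ^ 3 * |(γ 1).2 - (γ 0).2| ≤ ∫ s in (0:ℝ)..1, speedWP γ s := by
  set f' : ℝ → ℝ := fun x => derivWithin (fun u => (γ u).2) (Ioi x) x with hf'
  set g : ℝ → ℝ := fun s => (deriv γ s).2 with hg
  have hbound : ∀ s ∈ Icc (0:ℝ) 1, m ^ 3 * |g s| ≤ speedWP γ s := by
    intro s hs
    have h1' : m ^ 3 * |g s| ≤ (γ s).1 ^ 3 * |g s| := by
      apply mul_le_mul_of_nonneg_right _ (abs_nonneg _)
      exact pow_le_pow_left₀ hm.le (hmle s hs) 3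
    refine h1'.trans ?_
    have hx0 : (0:ℝ) ≤ (γ s).1 := hm.le.trans (hmle s hs)
    have h2' : (γ s).1 ^ 3 * |g s| = |(γ s).1 ^ 3 * g s| := by
      rw [abs_mul, abs_of_nonneg (pow_nonneg hx0 3)]
    rw [h2']
    have h3' : (γ s).1 ^ 6 * (deriv γ s).2 ^ 2 = ((γ s).1 ^ 3 * g s) ^ 2 := by
      simp only [hg]; ring
    rw [speedWP, h3']
    exact abs_le_sqrt_add' (by positivity)
  have hspeed : IntervalIntegrable (speedWP γ) volume 0 1 :=
    speed_intervalIntegrable hcont hmono h0 h1 hp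
  have hg_int : IntervalIntegrable g volume 0 1 := by
    apply IntervalIntegrable.mono_fun (hspeed.div_const (m ^ 3))
    · exact ((measurable_snd.comp (measurable_deriv γ)).aestronglyMeasurable)
    · filter_upwards [ae_restrict_mem measurableSet_uIoc] with s hs
      rw [uIoc_of_le zero_le_one] at hs
      have hb := hbound s ⟨hs.1.le, hs.2⟩
      simp only [Real.norm_eq_abs]
      rw [abs_of_nonneg (div_nonneg (speedWP_nonneg γ s) (by positivity))]
      rw [le_div_iff₀ (by positivity : (0:ℝ) < m ^ 3)]
      linarith [hb]
  have hae : ∀ᵐ s : ℝ, s ∉ (range tt ∪ {0, 1} : Set ℝ) := bad_ae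
  have hf'g : ∀ s ∈ Icc (0:ℝ) 1, s ∉ (range tt ∪ {0, 1} : Set ℝ) → f' s = g s := by
    intro s hs hsB
    simp only [mem_union, mem_insert_iff, mem_singleton_iff, not_or] at hsB
    have hs01 : s ∈ Ioo (0:ℝ) 1 :=
      ⟨lt_of_le_of_ne hs.1 (Ne.symm hsB.2.1), lt_of_le_of_ne hs.2 hsB.2.2⟩
    exact (rightDeriv_eq_deriv hmono h0 h1 hp hs01 hsB.1).2.2
  have hf'_ae : f' =ᵐ[volume.restrict (uIoc (0:ℝ) 1)] g := by
    filter_upwards [ae_restrict_of_ae hae, ae_restrict_mem measurableSet_uIoc] with s hs1 hs2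
    rw [uIoc_of_le zero_le_one] at hs2
    exact hf'g s ⟨hs2.1.le, hs2.2⟩ hs1
  have hf'_int : IntervalIntegrable f' volume 0 1 := hg_int.congr_ae hf'_ae.symm
  have hcont2 : ContinuousOn (fun u => (γ u).2) (Icc (0:ℝ) 1) :=
    continuous_snd.comp_continuousOn hcont
  have hFTC : ∫ s in (0:ℝ)..1, f' s = (γ 1).2 - (γ 0).2 := by
    apply integral_eq_sub_of_hasDeriv_right_of_le zero_le_one hcont2 _ hf'_int
    intro x hx
    exact (rightDeriv_exists hmono h0 h1 hp hx).2
  rw [← hFTC]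
  calc m ^ 3 * |∫ s in (0:ℝ)..1, f' s| ≤ m ^ 3 * ∫ s in (0:ℝ)..1, |f' s| := by
        apply mul_le_mul_of_nonneg_left (abs_integral_le_integral_abs zero_le_one)
        positivity
    _ = ∫ s in (0:ℝ)..1, m ^ 3 * |f' s| := (intervalIntegral.integral_const_mul _ _).symm
    _ ≤ ∫ s in (0:ℝ)..1, speedWP γ s := by
        apply integral_mono_ae_restrict zero_le_one (hf'_int.abs.const_mul _) hspeed
        filter_upwards [ae_restrict_of_ae hae, ae_restrict_mem measurableSet_Icc] with s hs1 hs2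
        rw [hf'g s hs2 hs1]
        exact hbound s hs2

end

/-- In the model space `(H, d)`, for `t > 0` and `θ₁, θ₂ ∈ ℝ`,
`d((t,θ₁),(t,θ₂)) ≥ min(t, t³ |θ₁ − θ₂| / 8)`. -/
theorem Hdist_circular_lower (t θ₁ θ₂ : ℝ) (ht : 0 < t) :
    min t (t ^ 3 * |θ₁ - θ₂| / 8) ≤ Hdist (t, θ₁) (t, θ₂) := by
  apply le_csInf
  · -- the set of lengths is nonempty: take the circular path at radius `t`
    refine ⟨pathLengthWP (fun s => (t, θ₁ + s * (θ₂ - θ₁))),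
      fun s => (t, θ₁ + s * (θ₂ - θ₁)), ⟨?_, 1, fun i => ((i : ℕ) : ℝ), ?_, ?_, ?_, ?_⟩,
      ?_, ?_, ?_, rfl⟩
    · exact (Continuous.continuousOn (by fun_prop))
    · intro i j hij
      exact Nat.cast_lt.mpr (Fin.lt_iff_val_lt_val.mp hij)
    · simp
    · simp [Fin.last]
    · intro i
      exact (contDiff_const.prodMk (contDiff_const.add (contDiff_id.mul contDiff_const))).contDiffOn
    · norm_num
    · norm_num
    · intro s _; exact ht
  · rintro L ⟨γ, ⟨hcont, n, tt, hmono, h0, h1, hp⟩, hγ0, hγ1, hpos, rfl⟩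
    obtain ⟨s₀, hs₀mem, hs₀min⟩ := isCompact_Icc.exists_isMinOn (nonempty_Icc.mpr zero_le_one)
      (continuous_fst.comp_continuousOn hcont)
    set m := (γ s₀).1 with hmdef
    have hmpos : 0 < m := hpos s₀ hs₀mem
    have hmle : ∀ s ∈ Icc (0:ℝ) 1, m ≤ (γ s).1 := fun s hs => hs₀min hs
    have hr0 : (γ 0).1 = t := by rw [hγ0]
    have hr1 : (γ 1).1 = t := by rw [hγ1]
    have hspeed : IntervalIntegrable (speedWP γ) volume 0 1 :=
      speed_intervalIntegrable hcont hmono h0 h1 hp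
    show _ ≤ pathLengthWP γ
    unfold pathLengthWP
    by_cases hcase : m ≤ t / 2
    · -- the path dips low: length at least `t`
      have hA := ftc_bound_fst hcont hmono h0 h1 hp le_rfl hs₀mem.1 hs₀mem.2
      have hB := ftc_bound_fst hcont hmono h0 h1 hp hs₀mem.1 hs₀mem.2 le_rfl
      have hsub1 : uIcc (0:ℝ) s₀ ⊆ uIcc (0:ℝ) 1 := by
        rw [uIcc_of_le hs₀mem.1, uIcc_of_le zero_le_one]
        exact Icc_subset_Icc le_rfl hs₀mem.2
      have hsub2 : uIcc s₀ (1:ℝ) ⊆ uIcc (0:ℝ) 1 := by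
        rw [uIcc_of_le hs₀mem.2, uIcc_of_le zero_le_one]
        exact Icc_subset_Icc hs₀mem.1 le_rfl
      have hadd : (∫ s in (0:ℝ)..s₀, speedWP γ s) + ∫ s in s₀..(1:ℝ), speedWP γ s
          = ∫ s in (0:ℝ)..1, speedWP γ s :=
        integral_add_adjacent_intervals (hspeed.mono_set hsub1) (hspeed.mono_set hsub2)
      have h1a : t - m ≤ |(γ s₀).1 - (γ 0).1| := by
        rw [hr0, ← hmdef, abs_sub_comm]
        exact le_abs_self _
      have h1b : t - m ≤ |(γ 1).1 - (γ s₀).1| := by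
        rw [hr1, ← hmdef]
        exact le_abs_self _
      have : min t (t ^ 3 * |θ₁ - θ₂| / 8) ≤ t := min_le_left _ _
      calc min t (t ^ 3 * |θ₁ - θ₂| / 8) ≤ t := min_le_left _ _
        _ ≤ (t - m) + (t - m) := by linarith
        _ ≤ (∫ s in (0:ℝ)..s₀, speedWP γ s) + ∫ s in s₀..(1:ℝ), speedWP γ s := by
            have := h1a.trans hA
            have := h1b.trans hB
            linarith
        _ = ∫ s in (0:ℝ)..1, speedWP γ s := hadd
    · -- the path stays high: length at least `m³ |Δθ| ≥ (t/2)³ |Δθ|`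
      push_neg at hcase
      have hth := ftc_bound_snd hcont hmono h0 h1 hp hmpos hmle
      have hΔ : (γ 1).2 - (γ 0).2 = θ₂ - θ₁ := by rw [hγ0, hγ1]
      calc min t (t ^ 3 * |θ₁ - θ₂| / 8) ≤ t ^ 3 * |θ₁ - θ₂| / 8 := min_le_right _ _
        _ = (t / 2) ^ 3 * |θ₂ - θ₁| := by rw [abs_sub_comm]; ring
        _ ≤ m ^ 3 * |θ₂ - θ₁| := by
            apply mul_le_mul_of_nonneg_right _ (abs_nonneg _)
            exact pow_le_pow_left₀ (by linarith) hcase.le 3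
        _ = m ^ 3 * |(γ 1).2 - (γ 0).2| := by rw [hΔ]
        _ ≤ ∫ s in (0:ℝ)..1, speedWP γ s := hth
end

section
/- In the model space (H, d), for all θ₁, θ₂ ∈ ℝ, the limit as t → 0⁺ of (1/(2t))·d((t,θ₁),(t,θ₂)) equals 0. Consequently the Alexandrov angle between the unit-speed radial geodesics t ↦ (t,θ₁) and t ↦ (t,θ₂), emanating from their common limit point at r = 0, is zero. -/
open Set

lemma Hdist_nonneg (p q : ℝ × ℝ) : 0 ≤ Hdist p q := by
  apply Real.sInf_nonneg
  rintro L ⟨γ, -, -, -, -, rfl⟩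
  exact intervalIntegral.integral_nonneg (by norm_num)
    (fun s _ => Real.sqrt_nonneg _)

lemma Hdist_le (θ₁ θ₂ : ℝ) {t : ℝ} (ht : 0 < t) :
    Hdist (t, θ₁) (t, θ₂) ≤ t ^ 3 * |θ₂ - θ₁| := by
  set γ : ℝ → ℝ × ℝ := fun s => (t, θ₁ + s * (θ₂ - θ₁)) with hγ
  have hderiv : ∀ s, deriv γ s = (0, θ₂ - θ₁) := by
    intro s
    have h2 : HasDerivAt (fun s : ℝ => θ₁ + s * (θ₂ - θ₁)) (θ₂ - θ₁) s := by
      simpa using ((hasDerivAt_id s).mul_const (θ₂ - θ₁)).const_add θ₁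
    have h : HasDerivAt γ (0, θ₂ - θ₁) s := (hasDerivAt_const s t).prodMk h2
    simpa using h.deriv
  have hspeed : ∀ s, speedWP γ s = t ^ 3 * |θ₂ - θ₁| := by
    intro s
    simp only [speedWP, hderiv]
    simp only [hγ]
    have : (0:ℝ) ^ 2 + t ^ 6 * (θ₂ - θ₁) ^ 2 = (t ^ 3 * |θ₂ - θ₁|) ^ 2 := by
      rw [mul_pow, sq_abs]; ring
    rw [this, Real.sqrt_sq (by positivity)]
  have hlen : pathLengthWP γ = t ^ 3 * |θ₂ - θ₁| := by
    unfold pathLengthWP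
    simp [hspeed]
  apply csInf_le
  · refine ⟨0, ?_⟩
    rintro L ⟨δ, -, -, -, -, rfl⟩
    exact intervalIntegral.integral_nonneg (by norm_num) (fun s _ => Real.sqrt_nonneg _)
  · refine ⟨γ, ⟨?_, 1, ![0, 1], ?_, rfl, rfl, ?_⟩, by simp [hγ], by simp [hγ], fun s _ => ht, hlen.symm⟩
    · exact (continuous_const.prodMk (continuous_const.add
        (continuous_id.mul continuous_const))).continuousOn
    · intro i j hij
      fin_cases i <;> fin_cases j <;> simp_all
    · intro i
      exact (contDiff_const.prodMk (contDiff_const.add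
        (contDiff_id.mul contDiff_const))).contDiffOn

/-- In the model space `(H, d)`, for all `θ₁, θ₂ ∈ ℝ` the limit as `t → 0⁺` of
`(1/(2t)) · d((t,θ₁),(t,θ₂))` is `0`; hence the Alexandrov angle
`∠(α,β) = lim_{t→0} (1/(2t)) d(α(t),β(t))` between the unit-speed radial geodesics
`α : t ↦ (t,θ₁)` and `β : t ↦ (t,θ₂)`, emanating from their common limit point at
`r = 0`, is zero. -/
theorem alexandrov_angle_zero (θ₁ θ₂ : ℝ) :
    Filter.Tendsto (fun t : ℝ => 1 / (2 * t) * Hdist (t, θ₁) (t, θ₂))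
      (nhdsWithin 0 (Set.Ioi 0)) (nhds 0) := by
  have hupper : ∀ t ∈ Set.Ioi (0:ℝ),
      1 / (2 * t) * Hdist (t, θ₁) (t, θ₂) ≤ t ^ 2 * |θ₂ - θ₁| / 2 := by
    intro t ht
    rw [Set.mem_Ioi] at ht
    have h := Hdist_le θ₁ θ₂ ht
    calc 1 / (2 * t) * Hdist (t, θ₁) (t, θ₂)
        ≤ 1 / (2 * t) * (t ^ 3 * |θ₂ - θ₁|) := by
          apply mul_le_mul_of_nonneg_left h (by positivity)
      _ = t ^ 2 * |θ₂ - θ₁| / 2 := by field_simp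
  have hlower : ∀ t ∈ Set.Ioi (0:ℝ),
      0 ≤ 1 / (2 * t) * Hdist (t, θ₁) (t, θ₂) := by
    intro t ht
    rw [Set.mem_Ioi] at ht
    exact mul_nonneg (by positivity) (Hdist_nonneg _ _)
  have hg : Filter.Tendsto (fun t : ℝ => t ^ 2 * |θ₂ - θ₁| / 2)
      (nhdsWithin 0 (Set.Ioi 0)) (nhds 0) := by
    have hc : Continuous (fun t : ℝ => t ^ 2 * |θ₂ - θ₁| / 2) :=
      ((continuous_pow 2).mul continuous_const).div_const (2:ℝ)
    have := hc.tendsto 0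
    simp only [ne_eq, OfNat.ofNat_ne_zero, not_false_eq_true, zero_pow, zero_mul,
      zero_div] at this
    exact this.mono_left nhdsWithin_le_nhds
  exact squeeze_zero' (Filter.eventually_of_mem self_mem_nhdsWithin hlower)
    (Filter.eventually_of_mem self_mem_nhdsWithin hupper) hg
end
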